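/- arXiv:1703.01716 — 2 statements merged into one kernel-verified Lean document; each statement's English description precedes it below -/
import Mathlib

section
/- Let f : ℝ → ℝ be a continuous involution with exactly one fixed point e. Then { x ∈ ℝ : x > f(x) } = (e, ∞) and { x ∈ ℝ : x < f(x) } = (−∞, e). -/
/-- for a continuous involution of `ℝ` with exactly one fixed point
`e`, the set `{x | x > f x}` is `(e, ∞)` and `{x | x < f x}` is `(-∞, e)`. -/
theorem stmt_14 (f : ℝ → ℝ) (hf : Continuous f) (hinv : ∀ x, f (f x) = x)
    (e : ℝ) (he : f e = e) (huniq : ∀ x, f x = x → x = e) :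
    {x : ℝ | f x < x} = Set.Ioi e ∧ {x : ℝ | x < f x} = Set.Iio e := by
  set g : ℝ → ℝ := fun x => f x - x with hg
  have hgc : Continuous g := hf.sub continuous_id
  have hA : ∀ x, e < x → f x < x := by
    intro x hx
    by_contra h
    push_neg at h
    have hlt : x < f x := lt_of_le_of_ne h (fun hxe => (by linarith [huniq x hxe.symm]))
    -- g x > 0, g (f x) = x - f x < 0, IVT on [x, f x]
    have h1 : g (f x) ≤ 0 := by simp [hg, hinv x]; linarith
    have h2 : 0 ≤ g x := by simp [hg]; linarith
    have := intermediate_value_Icc' (le_of_lt hlt) hgc.continuousOn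
    have h0 : (0:ℝ) ∈ Set.Icc (g (f x)) (g x) := ⟨h1, h2⟩
    obtain ⟨c, hc, hc0⟩ := this h0
    have : f c = c := by simp [hg] at hc0; linarith
    have hce := huniq c this
    have : e < c := lt_of_lt_of_le hx hc.1
    linarith [hce ▸ this]
  have hB : ∀ x, x < e → x < f x := by
    intro x hx
    by_contra h
    push_neg at h
    have hlt : f x < x := lt_of_le_of_ne h (fun hxe => (by linarith [huniq x hxe]))
    have h1 : g x ≤ 0 := by simp [hg]; linarith
    have h2 : 0 ≤ g (f x) := by simp [hg, hinv x]; linarith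
    have := intermediate_value_Icc' (le_of_lt hlt) hgc.continuousOn
    obtain ⟨c, hc, hc0⟩ := this ⟨h1, h2⟩
    have : f c = c := by simp [hg] at hc0; linarith
    have hce := huniq c this
    have : c < e := lt_of_le_of_lt hc.2 hx
    linarith [hce ▸ this]
  constructor
  · ext x
    simp only [Set.mem_setOf_eq, Set.mem_Ioi]
    constructor
    · intro h
      rcases lt_trichotomy x e with h1 | h1 | h1
      · exact absurd (hB x h1) (by linarith)
      · exact absurd (h1 ▸ he) (by subst h1; linarith)
      · exact h1
    · exact hA x
  · ext x
    simp only [Set.mem_setOf_eq, Set.mem_Iio]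
    constructor
    · intro h
      rcases lt_trichotomy x e with h1 | h1 | h1
      · exact h1
      · exact absurd (h1 ▸ he) (by subst h1; linarith)
      · exact absurd (hA x h1) (by linarith)
    · exact hB x
end

section
/- Let G be a subgroup of ℝ, f : G → G a continuous involution with unique fixed point e, A = { a ∈ G : a > f(a) }, and suppose h : A ∪ {e} → G ∩ [0, ∞) is a homeomorphism with h(e) = 0. Define h̃ : G → G by h̃(x) = h(x) for x ∈ A ∪ {e} and h̃(x) = −h(f(x)) for x ∈ f(A). Then h̃ is a homeomorphism of G onto itself. -/
open Set

private lemma glue_cont {X Y : Type*} [TopologicalSpace X] [TopologicalSpace Y] {f : X → Y}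
    {s t : Set X} (hs : IsClosed s) (ht : IsClosed t) (hst : s ∪ t = Set.univ)
    (hfs : ContinuousOn f s) (hft : ContinuousOn f t) : Continuous f := by
  rw [continuous_iff_isClosed]
  intro C hC
  have hE : f ⁻¹' C = (s ∩ f ⁻¹' C) ∪ (t ∩ f ⁻¹' C) := by
    rw [← Set.union_inter_distrib_right, hst, Set.univ_inter]
  rw [hE]
  exact (hfs.preimage_isClosed_of_isClosed hs hC).union
    (hft.preimage_isClosed_of_isClosed ht hC)

/-- gluing a homeomorphism `h : A ∪ {e} → G ∩ [0,∞)` (with `h e = 0`)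
with `x ↦ -h(f x)` on `f(A)` yields a homeomorphism `h̃` of `G` onto itself. -/
theorem stmt_15 (G : AddSubgroup ℝ) (f : G → G) (hf : Continuous f)
    (hinv : ∀ x : G, f (f x) = x) (e : G) (he : f e = e)
    (huniq : ∀ x : G, f x = x → x = e)
    (A : Set G) (hA : A = {a : G | (f a : ℝ) < a})
    (h : (A ∪ {e} : Set G) ≃ₜ {x : G | (0 : ℝ) ≤ x})
    (hhe : ∀ hem : e ∈ A ∪ {e}, ((h ⟨e, hem⟩ : {x : G | (0 : ℝ) ≤ x}) : G) = 0)
    (ht : G → G)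
    (ht1 : ∀ x : G, ∀ hx : x ∈ A ∪ {e}, ht x = ((h ⟨x, hx⟩ : {x : G | (0 : ℝ) ≤ x}) : G))
    (ht2 : ∀ x : G, x ∈ f '' A → ∀ hfx : f x ∈ A ∪ {e},
      ht x = -((h ⟨f x, hfx⟩ : {x : G | (0 : ℝ) ≤ x}) : G)) :
    ∃ t : G ≃ₜ G, ⇑t = ht := by
  classical
  have hem : e ∈ A ∪ {e} := Or.inr rfl
  have heA : e ∉ A := by
    rw [hA]; intro hc; simp only [mem_setOf_eq, he] at hc; exact lt_irrefl _ hc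
  -- cover of G
  have hcover : ∀ x : G, x ∈ A ∪ {e} ∨ x ∈ f '' A := by
    intro x
    rcases lt_trichotomy ((f x : ℝ)) (x : ℝ) with hlt | heq | hgt
    · exact Or.inl (Or.inl (by rw [hA]; exact hlt))
    · exact Or.inl (Or.inr (huniq x (Subtype.ext heq)))
    · refine Or.inr ⟨f x, ?_, hinv x⟩
      rw [hA]; simp only [mem_setOf_eq, hinv]; exact hgt
  have hfmem : ∀ x : G, x ∈ f '' A → f x ∈ A := by
    rintro x ⟨a, ha, rfl⟩; rwa [hinv]
  -- x ∈ f '' A implies x < f x, hence disjointness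
  have hlt' : ∀ x : G, x ∈ f '' A → (x : ℝ) < f x := by
    rintro x ⟨a, haA, rfl⟩
    rw [hA] at haA
    rw [hinv]
    exact haA
  have hdisj : ∀ x : G, x ∈ f '' A → x ∉ A ∪ {e} := by
    intro x hx hc
    have hxlt := hlt' x hx
    rcases hc with hc | hc
    · rw [hA] at hc; exact absurd (lt_trans hc hxlt) (lt_irrefl _)
    · rw [mem_singleton_iff] at hc; subst hc; rw [he] at hxlt; exact lt_irrefl _ hxlt
  -- strict positivity of h on A
  have hpos : ∀ (a : G) (ha : a ∈ A ∪ {e}), a ∈ A →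
      (0 : ℝ) < ((h ⟨a, ha⟩ : {x : G | (0 : ℝ) ≤ x}) : G) := by
    intro a ha haA
    have h2 : (0 : ℝ) ≤ ((h ⟨a, ha⟩ : {x : G | (0 : ℝ) ≤ x}) : G) := (h ⟨a, ha⟩).2
    rcases lt_or_eq_of_le h2 with hlt | heq
    · exact hlt
    · exfalso
      have h1 : h ⟨a, ha⟩ = h ⟨e, hem⟩ := by
        apply Subtype.ext
        apply Subtype.ext
        rw [hhe hem]
        exact heq.symm
      have := h.injective h1
      have : a = e := congrArg Subtype.val this
      exact heA (this ▸ haA)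
  -- the inverse function
  set g : G → G := fun y =>
    if h0 : (0 : ℝ) ≤ (y : ℝ) then
      ((h.symm ⟨y, h0⟩ : (A ∪ {e} : Set G)) : G)
    else
      f ((h.symm ⟨-y, by simp only [Set.mem_setOf_eq, NegMemClass.coe_neg]; linarith [lt_of_not_ge h0]⟩ : (A ∪ {e} : Set G)) : G) with hgdef
  -- left inverse
  have hli : ∀ x : G, g (ht x) = x := by
    intro x
    rcases hcover x with hx | hx
    · rw [ht1 x hx]
      set z := h ⟨x, hx⟩ with hz
      have h0 : (0 : ℝ) ≤ ((z : G) : ℝ) := z.2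
      rw [hgdef]
      simp only [dif_pos h0]
      have : (⟨(z : G), h0⟩ : {x : G | (0 : ℝ) ≤ x}) = z := Subtype.ext rfl
      rw [this, hz, h.symm_apply_apply]
    · have hfxA : f x ∈ A := hfmem x hx
      have hfx : f x ∈ A ∪ {e} := Or.inl hfxA
      rw [ht2 x hx hfx]
      set z := h ⟨f x, hfx⟩ with hz
      have hzpos : (0 : ℝ) < ((z : G) : ℝ) := hpos (f x) hfx hfxA
      have hneg : ¬ (0 : ℝ) ≤ ((-(z : G) : G) : ℝ) := by
        simp only [NegMemClass.coe_neg]; intro hc; linarith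
      rw [hgdef]
      simp only [dif_neg hneg]
      have hval : (⟨-(-(z:G)), by simp only [Set.mem_setOf_eq, NegMemClass.coe_neg]; linarith⟩ : {x : G | (0 : ℝ) ≤ x}) = z :=
        Subtype.ext (neg_neg _)
      rw [hval, hz, h.symm_apply_apply, hinv]
  -- right inverse
  have hri : ∀ y : G, ht (g y) = y := by
    intro y
    by_cases h0 : (0 : ℝ) ≤ (y : ℝ)
    · rw [hgdef]
      simp only [dif_pos h0]
      set w := h.symm ⟨y, h0⟩ with hw
      rw [ht1 (w : G) w.2]
      have : (⟨(w : G), w.2⟩ : ↥(A ∪ ({e} : Set G))) = w := Subtype.ext rfl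
      rw [this, hw, h.apply_symm_apply]
    · rw [hgdef]
      simp only [dif_neg h0]
      have hny : (0 : ℝ) ≤ ((-y : G) : ℝ) := by
        rw [NegMemClass.coe_neg]; linarith [lt_of_not_ge h0]
      set w := h.symm ⟨-y, hny⟩ with hw
      have hwA : (w : G) ∈ A := by
        rcases w.2 with hc | hc
        · exact hc
        · exfalso
          rw [mem_singleton_iff] at hc
          have hwe : w = ⟨e, hem⟩ := Subtype.ext hc
          have : h w = h ⟨e, hem⟩ := congrArg h hwe
          rw [hw, h.apply_symm_apply] at this
          have h4 : (⟨-y, hny⟩ : {x : G | (0 : ℝ) ≤ x}) = ⟨0, by simp⟩ := by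
            rw [this]; exact Subtype.ext (hhe hem)
          have h5 : (-y : G) = 0 := congrArg Subtype.val h4
          have h6 : y = 0 := neg_eq_zero.mp h5
          rw [h6] at h0
          exact h0 (by simp)
      have hmem : f (w : G) ∈ f '' A := ⟨(w : G), hwA, rfl⟩
      have hffw : f (f (w : G)) ∈ A ∪ {e} := by rw [hinv]; exact Or.inl hwA
      rw [ht2 (f (w : G)) hmem hffw]
      have hsub : (⟨f (f (w : G)), hffw⟩ : ↥(A ∪ ({e} : Set G))) = w := Subtype.ext (hinv _)
      rw [hsub, hw, h.apply_symm_apply, neg_neg]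
  -- topology facts
  have hAopen : IsOpen A := by
    rw [hA]
    exact isOpen_lt (continuous_subtype_val.comp hf) continuous_subtype_val
  have hfAeq : f '' A = f ⁻¹' A := by
    ext x
    constructor
    · rintro ⟨a, ha, rfl⟩; rw [mem_preimage, hinv]; exact ha
    · intro hx; exact ⟨f x, hx, hinv x⟩
  have hfAopen : IsOpen (f '' A) := by rw [hfAeq]; exact hAopen.preimage hf
  have hS1c : IsClosed (A ∪ {e} : Set G) := by
    have : (A ∪ {e} : Set G)ᶜ = f '' A := by
      ext x
      constructor
      · intro hx
        rcases hcover x with hc | hc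
        · exact absurd hc hx
        · exact hc
      · intro hx
        exact hdisj x hx
    rw [← isOpen_compl_iff, this]
    exact hfAopen
  have hS2c : IsClosed (Aᶜ : Set G) := hAopen.isClosed_compl
  have hS2mem : ∀ x : G, x ∈ (Aᶜ : Set G) → f x ∈ A ∪ {e} := by
    intro x hx
    rcases hcover x with hc | hc
    · rcases hc with hc | hc
      · exact absurd hc hx
      · rw [mem_singleton_iff] at hc; subst hc; rw [he]; exact Or.inr rfl
    · exact Or.inl (hfmem x hc)
  -- ht formula on Aᶜ
  have htcompl : ∀ x : G, ∀ hx : x ∈ (Aᶜ : Set G),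
      ht x = -((h ⟨f x, hS2mem x hx⟩ : {x : G | (0 : ℝ) ≤ x}) : G) := by
    intro x hx
    rcases hcover x with hc | hc
    · rcases hc with hc | hc
      · exact absurd hc hx
      · rw [mem_singleton_iff] at hc
        subst hc
        rw [ht1 x hem, hhe hem]
        have hsub : (⟨f x, hS2mem x hx⟩ : ↥(A ∪ ({x} : Set G))) = ⟨x, hem⟩ := Subtype.ext he
        rw [hsub, hhe hem, neg_zero]
    · exact ht2 x hc (hS2mem x hx)
  -- continuity of ht
  have htc : Continuous ht := by
    apply glue_cont hS1c hS2c
    · ext x; simp only [mem_union, mem_compl_iff, mem_univ, iff_true]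
      rcases hcover x with hc | hc
      · exact Or.inl hc
      · exact Or.inr (fun hxA => hdisj x hc (Or.inl hxA))
    · rw [continuousOn_iff_continuous_restrict]
      have heq : (A ∪ {e} : Set G).domRestrict ht =
          fun x : ↥(A ∪ ({e} : Set G)) => ((h x : {x : G | (0 : ℝ) ≤ x}) : G) := by
        funext x
        rw [Set.restrict_apply, ht1 x.1 x.2]
      rw [heq]
      exact continuous_subtype_val.comp h.continuous
    · rw [continuousOn_iff_continuous_restrict]
      have heq : (Aᶜ : Set G).domRestrict ht =
          fun x : ↥(Aᶜ : Set G) =>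
            -((h ⟨f x, hS2mem x.1 x.2⟩ : {x : G | (0 : ℝ) ≤ x}) : G) := by
        funext x
        rw [Set.restrict_apply, htcompl x.1 x.2]
      rw [heq]
      exact (continuous_subtype_val.comp (h.continuous.comp
        ((hf.comp continuous_subtype_val).subtype_mk _))).neg
  -- continuity of g
  have hgc : Continuous g := by
    have hPc : IsClosed {y : G | (0 : ℝ) ≤ (y : ℝ)} :=
      isClosed_le continuous_const continuous_subtype_val
    have hNc : IsClosed {y : G | (y : ℝ) ≤ 0} :=
      isClosed_le continuous_subtype_val continuous_const
    have hNmem : ∀ y : G, (y : ℝ) ≤ 0 → (0 : ℝ) ≤ ((-y : G) : ℝ) := by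
      intro y hy; rw [NegMemClass.coe_neg]; linarith
    have hgN : ∀ y : G, ∀ hy : (y : ℝ) ≤ 0,
        g y = f ((h.symm ⟨-y, hNmem y hy⟩ : (A ∪ {e} : Set G)) : G) := by
      intro y hy
      rcases lt_or_eq_of_le hy with hlt | heq0
      · rw [hgdef]
        have h0 : ¬ (0 : ℝ) ≤ (y : ℝ) := not_le.mpr hlt
        simp only [dif_neg h0]
      · have hy0 : y = 0 := Subtype.ext heq0
        subst hy0
        rw [hgdef]
        have h0 : (0 : ℝ) ≤ ((0 : G) : ℝ) := le_refl _
        simp only [dif_pos h0]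
        have key : ∀ (v : G) (hv : (0 : ℝ) ≤ (v : ℝ)), (v : ℝ) = 0 →
            ((h.symm ⟨v, hv⟩ : ↥(A ∪ ({e} : Set G))) : G) = e := by
          intro v hv hv0
          have hv' : (⟨v, hv⟩ : {x : G | (0 : ℝ) ≤ x}) = h ⟨e, hem⟩ := by
            apply Subtype.ext
            rw [hhe hem]
            exact Subtype.ext (by rw [hv0]; simp)
          rw [hv', h.symm_apply_apply]
        rw [key (0 : G) h0 (by simp), key (-(0 : G)) (hNmem 0 hy) (by simp), he]
    apply glue_cont hPc hNc
    · ext y; simp only [mem_union, mem_setOf_eq, mem_univ, iff_true]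
      exact le_total 0 (y : ℝ)
    · rw [continuousOn_iff_continuous_restrict]
      have heq : {y : G | (0 : ℝ) ≤ (y : ℝ)}.domRestrict g =
          fun y : ↥{y : G | (0 : ℝ) ≤ (y : ℝ)} =>
            ((h.symm ⟨y.1, y.2⟩ : (A ∪ {e} : Set G)) : G) := by
        funext y
        rw [Set.restrict_apply, hgdef]
        exact dif_pos y.2
      rw [heq]
      exact continuous_subtype_val.comp (h.symm.continuous.comp
        (continuous_subtype_val.subtype_mk _))
    · rw [continuousOn_iff_continuous_restrict]
      have heq : {y : G | (y : ℝ) ≤ 0}.domRestrict g =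
          fun y : ↥{y : G | (y : ℝ) ≤ 0} =>
            f ((h.symm ⟨-y.1, hNmem y.1 y.2⟩ : (A ∪ {e} : Set G)) : G) := by
        funext y
        rw [Set.restrict_apply, hgN y.1 y.2]
      rw [heq]
      exact hf.comp (continuous_subtype_val.comp (h.symm.continuous.comp
        ((continuous_subtype_val.neg.subtype_mk _))))
  exact ⟨⟨⟨ht, g, hli, hri⟩, htc, hgc⟩, rfl⟩
end
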